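/- For θ ∈ (0,1], the function G(θ) = log((√(1+θ²)+θ)·((√(1+θ²)+1)/θ)^θ) - log 2 - θ·log 3 attains its maximum value 0 at θ = 3/4; in particular (√(1+θ²)+θ)·((√(1+θ²)+1)/θ)^θ ≤ 2·3^θ for all θ ∈ (0,1], with equality at θ = 3/4. -/

import Mathlib

noncomputable def Adel (θ : ℝ) : ℝ :=
  (Real.sqrt (1 + θ ^ 2) + θ) * ((Real.sqrt (1 + θ ^ 2) + 1) / θ) ^ θ

noncomputable def Gdel (θ : ℝ) : ℝ :=
  Real.log (Adel θ) - Real.log 2 - θ * Real.log 3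

noncomputable def Fdel (θ : ℝ) : ℝ :=
  Real.log (Real.sqrt (1 + θ ^ 2) + θ) + θ * Real.log (Real.sqrt (1 + θ ^ 2) + 1)
    - θ * Real.log θ - Real.log 2 - θ * Real.log 3

lemma s_ge_one (θ : ℝ) : 1 ≤ Real.sqrt (1 + θ ^ 2) := by
  nlinarith [Real.sq_sqrt (show (0:ℝ) ≤ 1 + θ ^ 2 by positivity),
    Real.sqrt_nonneg (1 + θ ^ 2), sq_nonneg θ]

lemma G_eq_F {θ : ℝ} (hθ : 0 < θ) : Gdel θ = Fdel θ := by
  have hs1 := s_ge_one θ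
  have h1 : (0:ℝ) < Real.sqrt (1 + θ ^ 2) + θ := by linarith
  have h2 : (0:ℝ) < (Real.sqrt (1 + θ ^ 2) + 1) / θ := by positivity
  unfold Gdel Fdel Adel
  rw [Real.log_mul h1.ne' (Real.rpow_pos_of_pos h2 θ).ne', Real.log_rpow h2,
    Real.log_div (by linarith) hθ.ne']
  ring

lemma hasDeriv_F {θ : ℝ} (hθ : 0 < θ) :
    HasDerivAt Fdel (Real.log (Real.sqrt (1 + θ ^ 2) + 1) - Real.log θ - Real.log 3) θ := by
  have hs1 : 1 ≤ Real.sqrt (1 + θ ^ 2) := s_ge_one θ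
  have hs0 : 0 < Real.sqrt (1 + θ ^ 2) := by linarith
  have hsq : Real.sqrt (1 + θ ^ 2) ^ 2 = 1 + θ ^ 2 := Real.sq_sqrt (by positivity)
  have h1 : HasDerivAt (fun x : ℝ => 1 + x ^ 2) (2 * θ) θ := by
    simpa using (hasDerivAt_pow 2 θ).const_add 1
  have hs : HasDerivAt (fun x : ℝ => Real.sqrt (1 + x ^ 2))
      (2 * θ / (2 * Real.sqrt (1 + θ ^ 2))) θ := h1.sqrt (by positivity)
  have hA : HasDerivAt (fun x => Real.log (Real.sqrt (1 + x ^ 2) + x))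
      ((2 * θ / (2 * Real.sqrt (1 + θ ^ 2)) + 1) / (Real.sqrt (1 + θ ^ 2) + θ)) θ :=
    (hs.add (hasDerivAt_id θ)).log (ne_of_gt (show (0:ℝ) < Real.sqrt (1 + θ ^ 2) + θ by linarith))
  have hB : HasDerivAt (fun x => x * Real.log (Real.sqrt (1 + x ^ 2) + 1))
      (1 * Real.log (Real.sqrt (1 + θ ^ 2) + 1) +
        θ * (2 * θ / (2 * Real.sqrt (1 + θ ^ 2)) / (Real.sqrt (1 + θ ^ 2) + 1))) θ :=
    (hasDerivAt_id θ).mul ((hs.add_const 1).log (by positivity))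
  have hC : HasDerivAt (fun x : ℝ => x * Real.log x) (Real.log θ + 1) θ :=
    Real.hasDerivAt_mul_log hθ.ne'
  have hD : HasDerivAt (fun x : ℝ => x * Real.log 3) (Real.log 3) θ := by
    simpa using (hasDerivAt_id θ).mul_const (Real.log 3)
  have hfull := (((hA.add hB).sub hC).sub_const (Real.log 2)).sub hD
  have heq : (2 * θ / (2 * Real.sqrt (1 + θ ^ 2)) + 1) / (Real.sqrt (1 + θ ^ 2) + θ) +
      θ * (2 * θ / (2 * Real.sqrt (1 + θ ^ 2)) / (Real.sqrt (1 + θ ^ 2) + 1)) = 1 := by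
    set s := Real.sqrt (1 + θ ^ 2) with hsdef
    have hne1 : s + θ ≠ 0 := by positivity
    have hne2 : s + 1 ≠ 0 := by positivity
    field_simp
    linear_combination (-θ - s) * hsq
  have hF : HasDerivAt Fdel
      ((2 * θ / (2 * Real.sqrt (1 + θ ^ 2)) + 1) / (Real.sqrt (1 + θ ^ 2) + θ) +
        (1 * Real.log (Real.sqrt (1 + θ ^ 2) + 1) +
          θ * (2 * θ / (2 * Real.sqrt (1 + θ ^ 2)) / (Real.sqrt (1 + θ ^ 2) + 1))) -
        (Real.log θ + 1) - Real.log 3) θ := hfull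
  convert hF using 1
  linarith [heq]

lemma sqrt_lt {θ : ℝ} (hθ : 0 < θ) (h : θ < 3 / 4) :
    3 * θ < Real.sqrt (1 + θ ^ 2) + 1 := by
  have hsq : Real.sqrt (1 + θ ^ 2) ^ 2 = 1 + θ ^ 2 := Real.sq_sqrt (by positivity)
  have hs0 : 0 ≤ Real.sqrt (1 + θ ^ 2) := Real.sqrt_nonneg _
  nlinarith [sq_nonneg (Real.sqrt (1 + θ ^ 2) - (3 * θ - 1))]

lemma sqrt_gt {θ : ℝ} (hθ : 3 / 4 < θ) (h : θ ≤ 1) :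
    Real.sqrt (1 + θ ^ 2) + 1 < 3 * θ := by
  have hsq : Real.sqrt (1 + θ ^ 2) ^ 2 = 1 + θ ^ 2 := Real.sq_sqrt (by positivity)
  have hs0 : 0 ≤ Real.sqrt (1 + θ ^ 2) := Real.sqrt_nonneg _
  nlinarith [sq_nonneg (Real.sqrt (1 + θ ^ 2) + 1 - 3 * θ)]

lemma F_mono : MonotoneOn Fdel (Set.Ioc 0 (3 / 4 : ℝ)) := by
  have : StrictMonoOn Fdel (Set.Ioc 0 (3 / 4 : ℝ)) := by
    apply StrictMonoOn.mono (s := Set.Ioc 0 (3/4 : ℝ)) ?_ le_rfl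
    apply strictMonoOn_of_deriv_pos (convex_Ioc _ _)
    · intro x hx
      exact (hasDeriv_F hx.1).differentiableAt.continuousAt.continuousWithinAt
    · intro x hx
      rw [interior_Ioc] at hx
      rw [(hasDeriv_F hx.1).deriv]
      have h3 : Real.log 3 + Real.log x = Real.log (3 * x) :=
        (Real.log_mul (by norm_num) hx.1.ne').symm
      have : Real.log (3 * x) < Real.log (Real.sqrt (1 + x ^ 2) + 1) :=
        Real.log_lt_log (by linarith [hx.1]) (sqrt_lt hx.1 hx.2)
      linarith
  exact this.monotoneOn

lemma F_anti : AntitoneOn Fdel (Set.Icc (3 / 4 : ℝ) 1) := by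
  have : StrictAntiOn Fdel (Set.Icc (3 / 4 : ℝ) 1) := by
    apply strictAntiOn_of_deriv_neg (convex_Icc _ _)
    · intro x hx
      have hx0 : (0:ℝ) < x := lt_of_lt_of_le (by norm_num) hx.1
      exact (hasDeriv_F hx0).differentiableAt.continuousAt.continuousWithinAt
    · intro x hx
      rw [interior_Icc] at hx
      have hx0 : (0:ℝ) < x := lt_trans (by norm_num) hx.1
      rw [(hasDeriv_F hx0).deriv]
      have h3 : Real.log 3 + Real.log x = Real.log (3 * x) :=
        (Real.log_mul (by norm_num) hx0.ne').symm
      have hlt : Real.log (Real.sqrt (1 + x ^ 2) + 1) < Real.log (3 * x) := by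
        have h0 : (0:ℝ) < Real.sqrt (1 + x ^ 2) + 1 := by
          linarith [Real.sqrt_nonneg (1 + x ^ 2)]
        exact Real.log_lt_log h0 (sqrt_gt hx.1 hx.2.le)
      linarith
  exact this.antitoneOn

lemma sqrt_34 : Real.sqrt (1 + (3 / 4 : ℝ) ^ 2) = 5 / 4 := by
  rw [show (1 : ℝ) + (3 / 4 : ℝ) ^ 2 = (5 / 4 : ℝ) ^ 2 by norm_num,
    Real.sqrt_sq (by norm_num)]

lemma Adel_34 : Adel (3 / 4) = 2 * (3 : ℝ) ^ ((3 : ℝ) / 4) := by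
  unfold Adel
  rw [sqrt_34]
  norm_num

lemma Gdel_34 : Gdel (3 / 4) = 0 := by
  unfold Gdel
  rw [Adel_34, Real.log_mul (by norm_num) (Real.rpow_pos_of_pos (by norm_num) _).ne',
    Real.log_rpow (by norm_num)]
  ring

theorem delannoy_stmt_17 :
    (∀ θ : ℝ, 0 < θ → θ ≤ 1 → Gdel θ ≤ Gdel (3 / 4)) ∧ Gdel (3 / 4) = 0 ∧
    (∀ θ : ℝ, 0 < θ → θ ≤ 1 → Adel θ ≤ 2 * (3 : ℝ) ^ θ) ∧
    Adel (3 / 4) = 2 * (3 : ℝ) ^ ((3 : ℝ) / 4) := by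
  have hmax : ∀ θ : ℝ, 0 < θ → θ ≤ 1 → Gdel θ ≤ Gdel (3 / 4) := by
    intro θ h0 h1
    rw [G_eq_F h0, G_eq_F (by norm_num : (0:ℝ) < 3/4)]
    rcases le_or_gt θ (3 / 4) with h | h
    · exact F_mono ⟨h0, h⟩ ⟨by norm_num, le_rfl⟩ h
    · exact F_anti ⟨le_rfl, by norm_num⟩ ⟨h.le, h1⟩ h.le
  refine ⟨hmax, Gdel_34, ?_, Adel_34⟩
  intro θ h0 h1
  have hG : Gdel θ ≤ 0 := (hmax θ h0 h1).trans_eq Gdel_34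
  have hs1 := s_ge_one θ
  have hApos : 0 < Adel θ := by
    unfold Adel
    have : (0:ℝ) < (Real.sqrt (1 + θ ^ 2) + 1) / θ := div_pos (by linarith) h0
    exact mul_pos (by linarith) (Real.rpow_pos_of_pos this θ)
  have hlog : Real.log (Adel θ) ≤ Real.log (2 * (3:ℝ) ^ θ) := by
    rw [Real.log_mul (by norm_num) (Real.rpow_pos_of_pos (by norm_num) _).ne',
      Real.log_rpow (by norm_num)]
    unfold Gdel at hG; linarith
  calc Adel θ = Real.exp (Real.log (Adel θ)) := (Real.exp_log hApos).symm
    _ ≤ Real.exp (Real.log (2 * (3:ℝ) ^ θ)) := Real.exp_le_exp.mpr hlog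
    _ = 2 * (3:ℝ) ^ θ := Real.exp_log (by positivity)
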